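/- For 1 ≤ m ≤ n, Page's mean entropy H̄(m,n) = Σ_{k=n+1}^{mn} 1/k − (m−1)/(2n) is nonnegative. -/

import Mathlib

open scoped BigOperators

/-- Page's mean subsystem entropy `H̄(m,n) = ∑_{k=n+1}^{mn} 1/k − (m−1)/(2n)` is nonnegative. -/
theorem page_entropy_nonneg (m n : ℕ) (hm : 1 ≤ m) (hmn : m ≤ n) :
    0 ≤ (∑ k ∈ Finset.Icc (n + 1) (m * n), (1 : ℝ) / k) - ((m : ℝ) - 1) / (2 * n) := by
  have hn : 1 ≤ n := le_trans hm hmn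
  have hmn0 : 0 < m * n := Nat.mul_pos hm hn
  have hnle : n ≤ m * n := Nat.le_mul_of_pos_left n hm
  have key : ((Finset.Icc (n + 1) (m * n)).card : ℝ) * ((1 : ℝ) / (m * n)) ≤
      ∑ k ∈ Finset.Icc (n + 1) (m * n), (1 : ℝ) / k := by
    rw [← nsmul_eq_mul]
    apply Finset.card_nsmul_le_sum
    intro k hk
    rw [Finset.mem_Icc] at hk
    have hk0 : 0 < k := lt_of_lt_of_le (Nat.succ_pos n) hk.1
    apply div_le_div_of_nonneg_left (by norm_num) (by exact_mod_cast hk0)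
    exact_mod_cast hk.2
  rw [Nat.card_Icc] at key
  have hcard : m * n + 1 - (n + 1) = m * n - n := by omega
  rw [hcard] at key
  have hcast : ((m * n - n : ℕ) : ℝ) = (m : ℝ) * n - n := by
    push_cast [Nat.cast_sub hnle]; ring
  rw [hcast] at key
  have hfinal : ((m : ℝ) - 1) / (2 * n) ≤ ((m : ℝ) * n - n) * ((1 : ℝ) / (m * n)) := by
    have hmR : (1 : ℝ) ≤ m := by exact_mod_cast hm
    have hnR : (1 : ℝ) ≤ n := by exact_mod_cast hn
    have hmnR : (m : ℝ) ≤ n := by exact_mod_cast hmn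
    rw [mul_one_div, div_le_div_iff₀ (by positivity) (by positivity)]
    nlinarith
  linarith
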